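/- Let P1, P2, P3, P4, P̃3, P̃4, x7 be real numbers, τ0 ≥ 0 and μ0 > 0 be such that k0 = iμ0 satisfies the characteristic equation k⁴ + P1k³ + P2k² + P3k + P4 = (x7k² − P̃3k − P̃4)e^{−kτ0}, and suppose (x7μ0² + P̃4)² + P̃3²μ0² ≠ 0. Then the real part of the complex number [((2x7k0 − P̃3)e^{−k0τ0} − (4k0³ + 3P1k0² + 2P2k0 + P3)) / ((x7k0³ − P̃3k0² − P̃4k0)e^{−k0τ0})] − τ0/k0 equals (4μ0⁶ + 3y7μ0⁴ + 2y8μ0² + y9) / ((x7μ0² + P̃4)² + P̃3²μ0²), where y7 = P1² − 2P2, y8 = 2P4 + P2² − 2P1P3 − x7², y9 = P3² − 2P2P4 − P̃3² − 2x7P̃4. Equivalently, this real part equals z_v f′(μ0), where f(μ) = μ⁸ + y7μ⁶ + y8μ⁴ + y9μ² + y10 with y10 = P4² − P̃4², and z_v = [2μ0((x7μ0² + P̃4)² + P̃3²μ0²)]^{−1}; in particular its sign equals the sign of f′(μ0). -/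

import Mathlib

open Complex
set_option maxHeartbeats 1600000 in


/-- Transversality condition at a candidate Hopf point `(τ₀, iμ₀)` of the
characteristic equation at the endemic steady state of model (2): the real part
of `(dk/dτ)⁻¹` equals `z_v f′(μ₀)`, hence has the sign of `f′(μ₀)`. -/
theorem hopf_transversality
    (P1 P2 P3 P4 P3t P4t x7 tau0 mu0 : ℝ)
    (htau0 : 0 ≤ tau0) (hmu0 : 0 < mu0)
    (k0 : ℂ) (hk0 : k0 = (mu0 : ℂ) * Complex.I)
    (hchar : k0 ^ 4 + (P1 : ℂ) * k0 ^ 3 + (P2 : ℂ) * k0 ^ 2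
        + (P3 : ℂ) * k0 + (P4 : ℂ)
      = ((x7 : ℂ) * k0 ^ 2 - (P3t : ℂ) * k0 - (P4t : ℂ))
        * Complex.exp (-k0 * (tau0 : ℂ)))
    (hden : (x7 * mu0 ^ 2 + P4t) ^ 2 + P3t ^ 2 * mu0 ^ 2 ≠ 0)
    (y7 y8 y9 y10 zv : ℝ)
    (hy7 : y7 = P1 ^ 2 - 2 * P2)
    (hy8 : y8 = 2 * P4 + P2 ^ 2 - 2 * P1 * P3 - x7 ^ 2)
    (hy9 : y9 = P3 ^ 2 - 2 * P2 * P4 - P3t ^ 2 - 2 * x7 * P4t)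
    (hy10 : y10 = P4 ^ 2 - P4t ^ 2)
    (hzv : zv = (2 * mu0 * ((x7 * mu0 ^ 2 + P4t) ^ 2 + P3t ^ 2 * mu0 ^ 2))⁻¹)
    (E : ℂ)
    (hE : E = ((2 * (x7 : ℂ) * k0 - (P3t : ℂ)) * Complex.exp (-k0 * (tau0 : ℂ))
          - (4 * k0 ^ 3 + 3 * (P1 : ℂ) * k0 ^ 2 + 2 * (P2 : ℂ) * k0 + (P3 : ℂ)))
        / (((x7 : ℂ) * k0 ^ 3 - (P3t : ℂ) * k0 ^ 2 - (P4t : ℂ) * k0)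
            * Complex.exp (-k0 * (tau0 : ℂ)))
        - (tau0 : ℂ) / k0) :
    E.re = (4 * mu0 ^ 6 + 3 * y7 * mu0 ^ 4 + 2 * y8 * mu0 ^ 2 + y9)
        / ((x7 * mu0 ^ 2 + P4t) ^ 2 + P3t ^ 2 * mu0 ^ 2) ∧
    E.re = zv * deriv (fun mu : ℝ =>
        mu ^ 8 + y7 * mu ^ 6 + y8 * mu ^ 4 + y9 * mu ^ 2 + y10) mu0 ∧
    Real.sign E.re = Real.sign (deriv (fun mu : ℝ =>
        mu ^ 8 + y7 * mu ^ 6 + y8 * mu ^ 4 + y9 * mu ^ 2 + y10) mu0) := by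
  subst hk0
  have key : E.re = (4 * mu0 ^ 6 + 3 * (P1 ^ 2 - 2 * P2) * mu0 ^ 4
      + 2 * (2 * P4 + P2 ^ 2 - 2 * P1 * P3 - x7 ^ 2) * mu0 ^ 2
      + (P3 ^ 2 - 2 * P2 * P4 - P3t ^ 2 - 2 * x7 * P4t))
      / ((x7 * mu0 ^ 2 + P4t) ^ 2 + P3t ^ 2 * mu0 ^ 2) := by
    have hmu : mu0 ≠ 0 := ne_of_gt hmu0
    have hkne : ((mu0:ℂ)*I) ≠ 0 := by simp [Complex.ext_iff, hmu]
    have hMne : ((x7 : ℂ) * ((mu0:ℂ)*I) ^ 2 - (P3t : ℂ) * ((mu0:ℂ)*I) - (P4t : ℂ)) ≠ 0 := by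
      intro h
      rw [Complex.ext_iff] at h
      simp [pow_two] at h
      apply hden
      rcases h with ⟨h1, h2 | h2⟩
      · linear_combination (-(x7*mu0^2+P4t))*h1 + (P3t*mu0^2)*h2
      · exact absurd h2 hmu
    have hNne : ((mu0:ℂ)*I) ^ 4 + (P1 : ℂ) * ((mu0:ℂ)*I) ^ 3 + (P2 : ℂ) * ((mu0:ℂ)*I) ^ 2
          + (P3 : ℂ) * ((mu0:ℂ)*I) + (P4 : ℂ) ≠ 0 := by
      rw [hchar]; exact mul_ne_zero hMne (Complex.exp_ne_zero _)
    have hw : Complex.exp (-((mu0:ℂ)*I) * (tau0 : ℂ))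
        = (((mu0:ℂ)*I) ^ 4 + (P1 : ℂ) * ((mu0:ℂ)*I) ^ 3 + (P2 : ℂ) * ((mu0:ℂ)*I) ^ 2
          + (P3 : ℂ) * ((mu0:ℂ)*I) + (P4 : ℂ))
        / ((x7 : ℂ) * ((mu0:ℂ)*I) ^ 2 - (P3t : ℂ) * ((mu0:ℂ)*I) - (P4t : ℂ)) := by
      rw [eq_div_iff hMne]; linear_combination -hchar
    have hexp : Complex.normSq (Complex.exp (-((mu0:ℂ)*I)*(tau0:ℂ))) = 1 := by
      rw [Complex.normSq_eq_norm_sq, Complex.norm_exp]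
      simp
    have hAB : (mu0^4 - P2*mu0^2 + P4)^2 + (P3*mu0 - P1*mu0^3)^2
        = (x7*mu0^2+P4t)^2 + P3t^2*mu0^2 := by
      have h := congrArg Complex.normSq hchar
      rw [Complex.normSq_mul, hexp, mul_one] at h
      simp only [Complex.normSq_apply, Complex.add_re, Complex.add_im, Complex.mul_re,
        Complex.mul_im, Complex.sub_re, Complex.sub_im, Complex.I_re, Complex.I_im,
        Complex.ofReal_re, Complex.ofReal_im, pow_succ, pow_zero, one_mul] at h
      linear_combination h
    have hkMne : ((mu0:ℂ)*I) * ((x7 : ℂ) * ((mu0:ℂ)*I) ^ 2 - (P3t : ℂ) * ((mu0:ℂ)*I) - (P4t : ℂ)) ≠ 0 :=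
      mul_ne_zero hkne hMne
    have hkNne : ((mu0:ℂ)*I) * (((mu0:ℂ)*I) ^ 4 + (P1 : ℂ) * ((mu0:ℂ)*I) ^ 3 + (P2 : ℂ) * ((mu0:ℂ)*I) ^ 2
          + (P3 : ℂ) * ((mu0:ℂ)*I) + (P4 : ℂ)) ≠ 0 := mul_ne_zero hkne hNne
    have hDne : (mu0^2*((x7*mu0^2+P4t)^2+P3t^2*mu0^2)) ≠ 0 := by positivity
    have hDne2 : (mu0^2*((mu0^4 - P2*mu0^2 + P4)^2 + (P3*mu0 - P1*mu0^3)^2)) ≠ 0 := by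
      rw [hAB]; exact hDne
    have hDneC : ((mu0^2*((x7*mu0^2+P4t)^2+P3t^2*mu0^2) : ℝ) : ℂ) ≠ 0 :=
      Complex.ofReal_ne_zero.mpr hDne
    have hDneC2 : ((mu0^2*((mu0^4 - P2*mu0^2 + P4)^2 + (P3*mu0 - P1*mu0^3)^2) : ℝ) : ℂ) ≠ 0 :=
      Complex.ofReal_ne_zero.mpr hDne2
    have hT1 : (2*(x7:ℂ)*((mu0:ℂ)*I) - (P3t:ℂ))
          / (((mu0:ℂ)*I) * ((x7 : ℂ) * ((mu0:ℂ)*I) ^ 2 - (P3t : ℂ) * ((mu0:ℂ)*I) - (P4t : ℂ)))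
        = (((-(P3t^2*mu0^2)-2*x7*mu0^2*(x7*mu0^2+P4t) : ℝ) : ℂ)
            + ((P3t*mu0*(x7*mu0^2-P4t) : ℝ) : ℂ) * I)
          / ((mu0^2*((x7*mu0^2+P4t)^2+P3t^2*mu0^2) : ℝ) : ℂ) := by
      rw [div_eq_div_iff hkMne hDneC]
      apply Complex.ext <;>
        simp [pow_succ, Complex.mul_re, Complex.mul_im] <;> ring
    have hT2 : (4 * ((mu0:ℂ)*I) ^ 3 + 3 * (P1 : ℂ) * ((mu0:ℂ)*I) ^ 2 + 2 * (P2 : ℂ) * ((mu0:ℂ)*I) + (P3 : ℂ))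
          / (((mu0:ℂ)*I) * (((mu0:ℂ)*I) ^ 4 + (P1 : ℂ) * ((mu0:ℂ)*I) ^ 3 + (P2 : ℂ) * ((mu0:ℂ)*I) ^ 2
              + (P3 : ℂ) * ((mu0:ℂ)*I) + (P4 : ℂ)))
        = (((-(mu0*(P3*mu0 - P1*mu0^3)*(P3-3*P1*mu0^2))
              + mu0*(mu0^4 - P2*mu0^2 + P4)*(2*P2*mu0-4*mu0^3) : ℝ) : ℂ)
            + ((-(mu0*(P3*mu0 - P1*mu0^3)*(2*P2*mu0-4*mu0^3))
              - mu0*(mu0^4 - P2*mu0^2 + P4)*(P3-3*P1*mu0^2) : ℝ) : ℂ) * I)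
          / ((mu0^2*((mu0^4 - P2*mu0^2 + P4)^2 + (P3*mu0 - P1*mu0^3)^2) : ℝ) : ℂ) := by
      rw [div_eq_div_iff hkNne hDneC2]
      apply Complex.ext <;>
        simp [pow_succ, Complex.mul_re, Complex.mul_im] <;> ring
    rw [hAB] at hT2
    have hEeq : E = (2*(x7:ℂ)*((mu0:ℂ)*I) - (P3t:ℂ))
          / (((mu0:ℂ)*I) * ((x7 : ℂ) * ((mu0:ℂ)*I) ^ 2 - (P3t : ℂ) * ((mu0:ℂ)*I) - (P4t : ℂ)))
        - (4 * ((mu0:ℂ)*I) ^ 3 + 3 * (P1 : ℂ) * ((mu0:ℂ)*I) ^ 2 + 2 * (P2 : ℂ) * ((mu0:ℂ)*I) + (P3 : ℂ))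
          / (((mu0:ℂ)*I) * (((mu0:ℂ)*I) ^ 4 + (P1 : ℂ) * ((mu0:ℂ)*I) ^ 3 + (P2 : ℂ) * ((mu0:ℂ)*I) ^ 2
              + (P3 : ℂ) * ((mu0:ℂ)*I) + (P4 : ℂ)))
        - (tau0 : ℂ) / ((mu0:ℂ)*I) := by
      rw [hE]
      have h1 : ((x7:ℂ) * ((mu0:ℂ)*I) ^ 3 - (P3t:ℂ) * ((mu0:ℂ)*I) ^ 2 - (P4t:ℂ) * ((mu0:ℂ)*I))
            * Complex.exp (-((mu0:ℂ)*I) * (tau0:ℂ))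
          = ((mu0:ℂ)*I) * (((mu0:ℂ)*I) ^ 4 + (P1 : ℂ) * ((mu0:ℂ)*I) ^ 3 + (P2 : ℂ) * ((mu0:ℂ)*I) ^ 2
              + (P3 : ℂ) * ((mu0:ℂ)*I) + (P4 : ℂ)) := by
        have h2 : ((x7:ℂ) * ((mu0:ℂ)*I) ^ 3 - (P3t:ℂ) * ((mu0:ℂ)*I) ^ 2 - (P4t:ℂ) * ((mu0:ℂ)*I))
              * Complex.exp (-((mu0:ℂ)*I) * (tau0:ℂ))
            = ((mu0:ℂ)*I) * (((x7 : ℂ) * ((mu0:ℂ)*I) ^ 2 - (P3t : ℂ) * ((mu0:ℂ)*I) - (P4t : ℂ))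
                * Complex.exp (-((mu0:ℂ)*I) * (tau0:ℂ))) := by ring
        rw [h2, ← hchar]
      rw [h1, hw, sub_div]
      have h3 : (2*(x7:ℂ)*((mu0:ℂ)*I) - (P3t:ℂ))
            * ((((mu0:ℂ)*I) ^ 4 + (P1 : ℂ) * ((mu0:ℂ)*I) ^ 3 + (P2 : ℂ) * ((mu0:ℂ)*I) ^ 2
                + (P3 : ℂ) * ((mu0:ℂ)*I) + (P4 : ℂ))
              / ((x7 : ℂ) * ((mu0:ℂ)*I) ^ 2 - (P3t : ℂ) * ((mu0:ℂ)*I) - (P4t : ℂ)))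
            / (((mu0:ℂ)*I) * (((mu0:ℂ)*I) ^ 4 + (P1 : ℂ) * ((mu0:ℂ)*I) ^ 3 + (P2 : ℂ) * ((mu0:ℂ)*I) ^ 2
                + (P3 : ℂ) * ((mu0:ℂ)*I) + (P4 : ℂ)))
          = (2*(x7:ℂ)*((mu0:ℂ)*I) - (P3t:ℂ))
            / (((mu0:ℂ)*I) * ((x7 : ℂ) * ((mu0:ℂ)*I) ^ 2 - (P3t : ℂ) * ((mu0:ℂ)*I) - (P4t : ℂ))) := by
        rw [← mul_div_assoc, div_div,
          div_eq_div_iff (mul_ne_zero hMne (mul_ne_zero hkne hNne)) hkMne]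
        ring
      rw [h3]
    have ht3 : ((tau0:ℂ)/((mu0:ℂ)*I)).re = 0 := by
      simp [Complex.div_re, Complex.normSq_apply]
    rw [hEeq, hT1, hT2]
    rw [Complex.sub_re, Complex.sub_re, ht3, sub_zero, Complex.div_ofReal_re,
      Complex.div_ofReal_re]
    rw [Complex.add_re, Complex.add_re, Complex.ofReal_re, Complex.ofReal_re,
      Complex.mul_re, Complex.mul_re, Complex.ofReal_re, Complex.ofReal_re,
      Complex.ofReal_im, Complex.ofReal_im, Complex.I_re, Complex.I_im]
    field_simp
    ring
  have hmu : mu0 ≠ 0 := ne_of_gt hmu0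
  have hDpos : 0 < (x7 * mu0 ^ 2 + P4t) ^ 2 + P3t ^ 2 * mu0 ^ 2 :=
    lt_of_le_of_ne (by positivity) (Ne.symm hden)
  have hder : deriv (fun mu : ℝ =>
      mu ^ 8 + y7 * mu ^ 6 + y8 * mu ^ 4 + y9 * mu ^ 2 + y10) mu0
      = 8 * mu0 ^ 7 + 6 * y7 * mu0 ^ 5 + 4 * y8 * mu0 ^ 3 + 2 * y9 * mu0 := by
    have hd : HasDerivAt (fun mu : ℝ =>
        mu ^ 8 + y7 * mu ^ 6 + y8 * mu ^ 4 + y9 * mu ^ 2 + y10)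
        (8 * mu0 ^ 7 + 6 * y7 * mu0 ^ 5 + 4 * y8 * mu0 ^ 3 + 2 * y9 * mu0) mu0 := by
      have h := ((((hasDerivAt_pow 8 mu0).add
          ((hasDerivAt_pow 6 mu0).const_mul y7)).add
          ((hasDerivAt_pow 4 mu0).const_mul y8)).add
          ((hasDerivAt_pow 2 mu0).const_mul y9)).add_const y10
      refine h.congr_deriv ?_
      push_cast
      ring
    exact hd.deriv
  have part2 : E.re = zv * deriv (fun mu : ℝ =>
      mu ^ 8 + y7 * mu ^ 6 + y8 * mu ^ 4 + y9 * mu ^ 2 + y10) mu0 := by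
    rw [key, hder, hzv, hy7, hy8, hy9]
    have h2 : (2 * mu0 * ((x7 * mu0 ^ 2 + P4t) ^ 2 + P3t ^ 2 * mu0 ^ 2)) ≠ 0 := by
      positivity
    field_simp
    ring
  have hzvpos : 0 < zv := by
    rw [hzv]
    exact inv_pos.mpr (mul_pos (by positivity) hDpos)
  refine ⟨by rw [hy7, hy8, hy9]; exact key, part2, ?_⟩
  rcases lt_trichotomy (deriv (fun mu : ℝ =>
      mu ^ 8 + y7 * mu ^ 6 + y8 * mu ^ 4 + y9 * mu ^ 2 + y10) mu0) 0 with h | h | h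
  · rw [Real.sign_of_neg h, Real.sign_of_neg (by rw [part2]; exact mul_neg_of_pos_of_neg hzvpos h)]
  · rw [h, part2, h, mul_zero]
  · rw [Real.sign_of_pos h, Real.sign_of_pos (by rw [part2]; exact mul_pos hzvpos h)]
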